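/- Let h̃ = x_agg W₁ᵀ + x W₂ᵀ + b be a GraphSAGE layer and L = ℓ(h̃). If for some index i we have ∂L/∂b_i ≠ 0, then both x and x_agg are uniquely determined by the first-layer gradients (∇_{W₁}L, ∇_{W₂}L, ∇_b L): x = ∇_{(W₂)_i}L/(∂L/∂b_i) and x_agg = ∇_{(W₁)_i}L/(∂L/∂b_i). -/

import Mathlib

lemma deriv_line {F : ℕ} (ℓ : (Fin F → ℝ) → ℝ) (hℓ : Differentiable ℝ ℓ)
    (c v : Fin F → ℝ) :
    deriv (fun t : ℝ => ℓ (c + t • v)) 0 = fderiv ℝ ℓ c v := by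
  have h1 : HasDerivAt (fun t : ℝ => c + t • v) v 0 := by
    simpa using (((hasDerivAt_id (0:ℝ)).smul_const v).const_add c)
  have hc : HasFDerivAt ℓ (fderiv ℝ ℓ c) (c + (0:ℝ) • v) := by
    simpa using (hℓ c).hasFDerivAt
  have h2 := hc.comp_hasDerivAt 0 h1
  simpa [Function.comp_def] using h2.deriv

lemma std_mulVec {F D : ℕ} (i : Fin F) (j : Fin D) (x : Fin D → ℝ) :
    (Matrix.single i j (1:ℝ)).mulVec x = Pi.single i (x j) := by
  funext k
  simp [Matrix.mulVec, Matrix.single, dotProduct, Pi.single_apply]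
  by_cases h : k = i
  · simp [h]
  · simp [h, fun a : Fin D => show ¬(i = k ∧ j = a) from fun ⟨hi, _⟩ => h hi.symm]



/-- GraphSAGE layer h̃ = x_agg W₁ᵀ + x W₂ᵀ + b: if ∂L/∂b_i ≠ 0 for
some i, then both x and x_agg are uniquely determined by the first-layer
gradients: x = ∇_{(W₂)_i}L/(∂L/∂b_i) and x_agg = ∇_{(W₁)_i}L/(∂L/∂b_i). -/
theorem stmt_18 (D F : ℕ)
    (ℓ : (Fin F → ℝ) → ℝ) (hℓ : Differentiable ℝ ℓ)
    (xagg x : Fin D → ℝ) (W₁ W₂ : Matrix (Fin F) (Fin D) ℝ) (b : Fin F → ℝ)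
    (gradW₁ gradW₂ : Fin F → Fin D → ℝ) (gradb : Fin F → ℝ)
    (hW₁ : ∀ i j, gradW₁ i j =
      deriv (fun t : ℝ => ℓ ((W₁ + t • Matrix.single i j (1:ℝ)).mulVec xagg +
        W₂.mulVec x + b)) 0)
    (hW₂ : ∀ i j, gradW₂ i j =
      deriv (fun t : ℝ => ℓ (W₁.mulVec xagg +
        (W₂ + t • Matrix.single i j (1:ℝ)).mulVec x + b)) 0)
    (hb : ∀ i, gradb i =
      deriv (fun t : ℝ => ℓ (W₁.mulVec xagg + W₂.mulVec x + (b + t • (Pi.single i (1:ℝ) : Fin F → ℝ)))) 0)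
    (i : Fin F) (hne : gradb i ≠ 0) :
    (∀ j, x j = gradW₂ i j / gradb i) ∧
    (∀ j, xagg j = gradW₁ i j / gradb i) := by
  set c : Fin F → ℝ := W₁.mulVec xagg + W₂.mulVec x + b with hc
  have hbi : gradb i = fderiv ℝ ℓ c (Pi.single i (1:ℝ)) := by
    rw [hb i, show (fun t : ℝ => ℓ (W₁.mulVec xagg + W₂.mulVec x +
        (b + t • (Pi.single i (1:ℝ) : Fin F → ℝ)))) =
        fun t : ℝ => ℓ (c + t • (Pi.single i (1:ℝ) : Fin F → ℝ)) from by
      funext t; rw [hc]; ring_nf]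
    exact deriv_line ℓ hℓ c _
  have key : ∀ (v : Fin D → ℝ) j, fderiv ℝ ℓ c (Pi.single i (v j)) = v j * gradb i := by
    intro v j
    have : (Pi.single i (v j) : Fin F → ℝ) = v j • (Pi.single i (1:ℝ) : Fin F → ℝ) := by
      funext k; simp [Pi.single_apply]
    rw [this, map_smul, hbi]; rfl
  constructor
  · intro j
    have h2 : gradW₂ i j = x j * gradb i := by
      rw [hW₂ i j, show (fun t : ℝ => ℓ (W₁.mulVec xagg +
          (W₂ + t • Matrix.single i j (1:ℝ)).mulVec x + b)) =
          fun t : ℝ => ℓ (c + t • (Pi.single i (x j) : Fin F → ℝ)) from by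
        funext t
        rw [Matrix.add_mulVec, Matrix.smul_mulVec, std_mulVec, hc]
        ring_nf]
      rw [deriv_line ℓ hℓ c _, key x j]
    rw [h2]; field_simp
  · intro j
    have h1 : gradW₁ i j = xagg j * gradb i := by
      rw [hW₁ i j, show (fun t : ℝ => ℓ ((W₁ + t • Matrix.single i j (1:ℝ)).mulVec xagg +
          W₂.mulVec x + b)) =
          fun t : ℝ => ℓ (c + t • (Pi.single i (xagg j) : Fin F → ℝ)) from by
        funext t
        rw [Matrix.add_mulVec, Matrix.smul_mulVec, std_mulVec, hc]
        ring_nf]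
      rw [deriv_line ℓ hℓ c _, key xagg j]
    rw [h1]; field_simp
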